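/- arXiv:1711.07296 — 5 statements merged into one kernel-verified Lean document; each statement's English description precedes it below -/
import Mathlib

section
/- A homogeneous polynomial f ∈ ℂ[z₁,…,zₙ] is K-stable if and only if f is hyperbolic with respect to every point in the interior of K. -/
def KStable {n : ℕ} (K : Set (Fin n → ℝ)) (f : MvPolynomial (Fin n) ℂ) : Prop :=
  ∀ z : Fin n → ℂ, (fun j => (z j).im) ∈ interior K → MvPolynomial.eval z f ≠ 0

/-- A homogeneous polynomial `f` is hyperbolic in direction `e` if `f(e) ≠ 0` and for every
`x ∈ ℝⁿ` the univariate polynomial `t ↦ f(x + t e)` has only real roots. -/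
def Hyperbolic {n : ℕ} (f : MvPolynomial (Fin n) ℂ) (e : Fin n → ℝ) : Prop :=
  MvPolynomial.eval (fun j => (e j : ℂ)) f ≠ 0 ∧
    ∀ x : Fin n → ℝ, ∀ t : ℂ,
      MvPolynomial.eval (fun j => (x j : ℂ) + t * (e j : ℂ)) f = 0 → t.im = 0

lemma eval_mul_homog {n : ℕ} (f : MvPolynomial (Fin n) ℂ) (d : ℕ)
    (hf : f.IsHomogeneous d) (c : ℂ) (z : Fin n → ℂ) :
    MvPolynomial.eval (fun j => c * z j) f = c ^ d * MvPolynomial.eval z f := by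
  rw [MvPolynomial.eval_eq, MvPolynomial.eval_eq, Finset.mul_sum]
  apply Finset.sum_congr rfl
  intro m hm
  rw [MvPolynomial.mem_support_iff] at hm
  have hdeg : ∑ i ∈ m.support, m i = d := by
    have := hf hm
    simpa [Finsupp.weight_apply, Finsupp.sum] using this
  calc f.coeff m * ∏ i ∈ m.support, (c * z i) ^ m i
      = f.coeff m * ((∏ i ∈ m.support, c ^ m i) * ∏ i ∈ m.support, z i ^ m i) := by
        simp [mul_pow, Finset.prod_mul_distrib]
    _ = c ^ d * (f.coeff m * ∏ i ∈ m.support, z i ^ m i) := by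
        rw [Finset.prod_pow_eq_pow_sum, hdeg]; ring

lemma smul_mem_interior {n : ℕ} (K : Set (Fin n → ℝ))
    (hKcone : ∀ (c : ℝ), 0 ≤ c → ∀ x ∈ K, c • x ∈ K)
    {c : ℝ} (hc : 0 < c) {e : Fin n → ℝ} (he : e ∈ interior K) :
    c • e ∈ interior K := by
  have hmap : IsOpenMap (fun x : Fin n → ℝ => c • x) := isOpenMap_smul₀ hc.ne'
  have hopen : IsOpen ((fun x : Fin n → ℝ => c • x) '' interior K) :=
    hmap _ isOpen_interior
  have hsub : (fun x : Fin n → ℝ => c • x) '' interior K ⊆ K := by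
    rintro _ ⟨x, hx, rfl⟩
    exact hKcone c hc.le x (interior_subset hx)
  exact interior_maximal hsub hopen ⟨e, he, rfl⟩

/-- A homogeneous polynomial is `K`-stable iff it is hyperbolic with respect to every point
in the interior of `K`. -/
theorem stmt1 {n : ℕ} (K : Set (Fin n → ℝ))
    (hKcl : IsClosed K) (hKconv : Convex ℝ K)
    (hKcone : ∀ (c : ℝ), 0 ≤ c → ∀ x ∈ K, c • x ∈ K)
    (hKpointed : K ∩ (-K) ⊆ {0}) (hKfull : (interior K).Nonempty)
    (f : MvPolynomial (Fin n) ℂ) (d : ℕ) (hf : f.IsHomogeneous d) :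
    KStable K f ↔ ∀ e ∈ interior K, Hyperbolic f e := by
  constructor
  · intro hS e he
    constructor
    · -- f(e) ≠ 0
      have him : (fun j => ((Complex.I * (e j : ℂ)).im)) ∈ interior K := by
        simpa [Complex.mul_im] using he
      have h1 := hS (fun j => Complex.I * (e j : ℂ)) him
      rw [eval_mul_homog f d hf] at h1
      intro h0
      exact h1 (by rw [h0, mul_zero])
    · intro x t heval
      by_contra hts
      rcases lt_or_gt_of_ne hts with hneg | hpos
      · -- t.im < 0 : use -(x + t e)
        have him : (fun j => ((-1 : ℂ) * ((x j : ℂ) + t * (e j : ℂ))).im) ∈ interior K := by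
          have : (fun j => ((-1 : ℂ) * ((x j : ℂ) + t * (e j : ℂ))).im)
              = (-t.im) • e := by
            funext j
            simp [Complex.mul_im, Complex.add_im, Complex.mul_re]
          rw [this]
          exact smul_mem_interior K hKcone (by linarith) he
        have := hS _ him
        rw [eval_mul_homog f d hf, heval, mul_zero] at this
        exact this rfl
      · -- t.im > 0
        have him : (fun j => (((x j : ℂ) + t * (e j : ℂ)).im)) ∈ interior K := by
          have : (fun j => (((x j : ℂ) + t * (e j : ℂ)).im)) = t.im • e := by
            funext j
            simp [Complex.add_im, Complex.mul_im]
          rw [this]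
          exact smul_mem_interior K hKcone hpos he
        exact hS _ him heval
  · intro hH z hz
    intro h0
    have hhyp := (hH (fun j => (z j).im) hz).2 (fun j => (z j).re) Complex.I
    have hzeq : (fun j => ((z j).re : ℂ) + Complex.I * ((z j).im : ℂ)) = z := by
      funext j
      rw [mul_comm, Complex.re_add_im]
    rw [hzeq] at hhyp
    simpa using hhyp h0
end

section
/- Let f, g ∈ ℝ[z₁,…,zₙ] and K ⊂ ℝⁿ be a proper cone. Then g + i·f is K-stable if and only if the polynomial g + w·f ∈ ℝ[z₁,…,zₙ, w] is (K × ℝ≥0)-stable. -/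
open MvPolynomial
-- pointwise root inequality
lemma pt_ineq (a : ℂ) (ha : a.im ≤ -1) :
    ‖(-(2*Complex.I) - a)‖ ≤ ‖(-a)‖ := by
  rw [Complex.norm_def, Complex.norm_def]
  apply Real.sqrt_le_sqrt
  simp [Complex.normSq_apply]
  nlinarith

lemma prod_ineq (s : Multiset ℂ) (h : ∀ a ∈ s, a.im ≤ -1) :
    ‖((s.map (fun a => -(2*Complex.I) - a)).prod)‖
      ≤ ‖((s.map (fun a => -a)).prod)‖ := by
  induction s using Multiset.induction with
  | empty => simp
  | cons a s ih =>
    simp only [Multiset.map_cons, Multiset.prod_cons, norm_mul]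
    exact mul_le_mul (pt_ineq a (h a (Multiset.mem_cons_self a s)))
      (ih (fun b hb => h b (Multiset.mem_cons_of_mem hb)))
      (norm_nonneg _) (norm_nonneg _)

lemma abs_eval_le (q : Polynomial ℂ) (hq : ∀ t : ℂ, -1 < t.im → q.eval t ≠ 0) :
    ‖(q.eval (-(2*Complex.I)))‖ ≤ ‖(q.eval 0)‖ := by
  have hq0 : q ≠ 0 := by
    intro h
    exact hq 0 (by norm_num) (by simp [h])
  have hroots : ∀ a ∈ q.roots, a.im ≤ -1 := by
    intro a ha
    by_contra h
    push_neg at h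
    exact hq a h ((Polynomial.isRoot_of_mem_roots ha))
  have hsplit := (IsAlgClosed.splits q).eq_prod_roots
  rw [hsplit]
  simp only [Polynomial.eval_mul, Polynomial.eval_C, Polynomial.eval_multiset_prod,
    Multiset.map_map, Function.comp, Polynomial.eval_sub, Polynomial.eval_X, Polynomial.eval_C,
    norm_mul]
  have h1 : ∀ t : ℂ, (Multiset.map (fun a => t - a) q.roots) = (Multiset.map (fun a => t - a) q.roots) := fun _ => rfl
  refine mul_le_mul_of_nonneg_left ?_ (norm_nonneg _)
  have := prod_ineq q.roots hroots
  simpa [zero_sub] using this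
lemma interior_smul_mem {n : ℕ} {K : Set (Fin n → ℝ)}
    (hKcone : ∀ (c : ℝ), 0 ≤ c → ∀ x ∈ K, c • x ∈ K)
    {c : ℝ} (hc : 0 < c) {x : Fin n → ℝ} (hx : x ∈ interior K) : c • x ∈ interior K := by
  have hcont : Continuous (fun y : Fin n → ℝ => c⁻¹ • y) := by continuity
  have hsub : (fun y : Fin n → ℝ => c⁻¹ • y) ⁻¹' interior K ⊆ K := by
    intro y hy
    have : c • (c⁻¹ • y) ∈ K := hKcone c hc.le _ (interior_subset hy)
    rwa [smul_smul, mul_inv_cancel₀ hc.ne', one_smul] at this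
  have hmem : c • x ∈ (fun y : Fin n → ℝ => c⁻¹ • y) ⁻¹' interior K := by
    simp only [Set.mem_preimage, smul_smul, inv_mul_cancel₀ hc.ne', one_smul]
    exact hx
  exact interior_maximal hsub (hcont.isOpen_preimage _ isOpen_interior) hmem

lemma core {n : ℕ} {K : Set (Fin n → ℝ)}
    (hKcone : ∀ (c : ℝ), 0 ≤ c → ∀ x ∈ K, c • x ∈ K)
    (f g : MvPolynomial (Fin n) ℝ)
    (hs : KStable K (g.map (algebraMap ℝ ℂ) + C Complex.I * f.map (algebraMap ℝ ℂ)))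
    (z : Fin n → ℂ) (hz : (fun j => (z j).im) ∈ interior K)
    (w : ℂ) (hw : 0 < w.im) :
    MvPolynomial.eval z (g.map (algebraMap ℝ ℂ)) + w * MvPolynomial.eval z (f.map (algebraMap ℝ ℂ)) ≠ 0 := by
  set y : Fin n → ℝ := fun j => (z j).im with hy
  set h : MvPolynomial (Fin n) ℂ :=
    g.map (algebraMap ℝ ℂ) + C Complex.I * f.map (algebraMap ℝ ℂ) with hh
  set Q : Polynomial ℂ := MvPolynomial.aeval
    (fun i => Polynomial.C (z i) + Polynomial.C ((y i : ℂ)) * Polynomial.X) h with hQ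
  have hQe : ∀ t : ℂ, Q.eval t = MvPolynomial.eval (fun i => z i + (y i : ℂ) * t) h := by
    intro t
    have : ((Polynomial.evalRingHom t).comp
        (MvPolynomial.aeval (R := ℂ)
          (fun i => Polynomial.C (z i) + Polynomial.C ((y i : ℂ)) * Polynomial.X)).toRingHom)
        = (MvPolynomial.eval (fun i => z i + (y i : ℂ) * t)) := by
      apply MvPolynomial.ringHom_ext
      · intro r; simp
      · intro i; simp
    exact RingHom.congr_fun this h
  -- nonvanishing of Q on Im t > -1
  have hQne : ∀ t : ℂ, -1 < t.im → Q.eval t ≠ 0 := by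
    intro t ht
    rw [hQe]
    apply hs
    have hfun : (fun j => (z j + (y j : ℂ) * t).im) = (1 + t.im) • y := by
      funext j
      simp [Complex.add_im, Complex.mul_im, hy]
      ring
    rw [hfun]
    exact interior_smul_mem hKcone (by linarith) hz
  -- the inequality
  have habs := abs_eval_le Q hQne
  set G := MvPolynomial.eval z (g.map (algebraMap ℝ ℂ)) with hG
  set F := MvPolynomial.eval z (f.map (algebraMap ℝ ℂ)) with hF
  have hQ0 : Q.eval 0 = G + Complex.I * F := by
    rw [hQe 0]
    simp [hh, hG, hF]
  have hzconj : ∀ i, z i + (y i : ℂ) * (-(2*Complex.I)) = (starRingEnd ℂ) (z i) := by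
    intro i
    apply Complex.ext <;> simp [hy] <;> ring
  have hconj : ∀ p : MvPolynomial (Fin n) ℝ,
      MvPolynomial.eval (fun i => (starRingEnd ℂ) (z i)) (p.map (algebraMap ℝ ℂ))
        = (starRingEnd ℂ) (MvPolynomial.eval z (p.map (algebraMap ℝ ℂ))) := by
    intro p
    have : ((MvPolynomial.eval (fun i => (starRingEnd ℂ) (z i))).comp
          (MvPolynomial.map (algebraMap ℝ ℂ)))
        = ((starRingEnd ℂ).comp ((MvPolynomial.eval z).comp (MvPolynomial.map (algebraMap ℝ ℂ)))) := by
      apply MvPolynomial.ringHom_ext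
      · intro r; simp [Complex.conj_ofReal]
      · intro i; simp
    exact RingHom.congr_fun this p
  have hQ2 : Q.eval (-(2*Complex.I)) = (starRingEnd ℂ) (G - Complex.I * F) := by
    rw [hQe]
    simp only [hzconj]
    simp only [hh, map_add, map_mul, MvPolynomial.eval_C]
    rw [hconj g, hconj f]
    rw [map_sub, map_mul]
    simp only [hG, hF, MvPolynomial.eval_map, Complex.conj_I]
    ring
  rw [hQ0, hQ2, Complex.norm_conj] at habs
  -- conclude
  have hne : G + Complex.I * F ≠ 0 := by
    rw [← hQ0]; exact hQne 0 (by norm_num)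
  intro heq
  have hFne : F ≠ 0 := by
    intro h0
    apply hne
    rw [h0, mul_zero, add_zero]
    rw [h0, mul_zero, add_zero] at heq
    exact heq
  have hGeq : G = -(w * F) := by linear_combination heq
  have hsq : Complex.normSq (G - Complex.I * F) ≤ Complex.normSq (G + Complex.I * F) := by
    rw [← Complex.sq_norm, ← Complex.sq_norm]
    exact pow_le_pow_left₀ (norm_nonneg _) habs 2
  have hFpos : 0 < F.re ^ 2 + F.im ^ 2 := by
    have := Complex.normSq_pos.mpr hFne
    rw [Complex.normSq_apply] at this
    nlinarith
  rw [hGeq] at hsq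
  simp only [Complex.normSq_apply, Complex.add_re, Complex.add_im, Complex.sub_re,
    Complex.sub_im, Complex.neg_re, Complex.neg_im, Complex.mul_re, Complex.mul_im,
    Complex.I_re, Complex.I_im] at hsq
  nlinarith [hw, hFpos, sq_nonneg (F.re), sq_nonneg (F.im)]

lemma mem_interior_prod {n : ℕ} {K : Set (Fin n → ℝ)} {Y : Fin (n+1) → ℝ}
    (hY : Y ∈ interior {y : Fin (n + 1) → ℝ |
        (fun i : Fin n => y i.castSucc) ∈ K ∧ 0 ≤ y (Fin.last n)}) :
    (fun i : Fin n => Y i.castSucc) ∈ interior K ∧ 0 < Y (Fin.last n) := by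
  set S := {y : Fin (n + 1) → ℝ | (fun i : Fin n => y i.castSucc) ∈ K ∧ 0 ≤ y (Fin.last n)} with hS
  constructor
  · have hσ : Continuous (fun x : Fin n → ℝ => (Fin.snoc x (Y (Fin.last n)) : Fin (n+1) → ℝ)) := by
      apply continuous_pi
      intro j
      induction j using Fin.lastCases with
      | last => simp only [Fin.snoc_last]; exact continuous_const
      | cast i => simp only [Fin.snoc_castSucc]; exact continuous_apply i
    have hsub : (fun x : Fin n → ℝ => (Fin.snoc x (Y (Fin.last n)) : Fin (n+1) → ℝ)) ⁻¹' interior S ⊆ K := by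
      intro x hx
      have hxS : (Fin.snoc x (Y (Fin.last n)) : Fin (n+1) → ℝ) ∈ S := interior_subset hx
      have := hxS.1
      simpa [Fin.snoc_castSucc] using this
    have hmem : (fun i : Fin n => Y i.castSucc) ∈
        (fun x : Fin n → ℝ => (Fin.snoc x (Y (Fin.last n)) : Fin (n+1) → ℝ)) ⁻¹' interior S := by
      show (Fin.snoc (fun i : Fin n => Y i.castSucc) (Y (Fin.last n)) : Fin (n+1) → ℝ) ∈ interior S
      have : (Fin.snoc (fun i : Fin n => Y i.castSucc) (Y (Fin.last n)) : Fin (n+1) → ℝ) = Y := by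
        exact Fin.snoc_init_self Y
      rw [this]; exact hY
    exact interior_maximal hsub (hσ.isOpen_preimage _ isOpen_interior) hmem
  · have hY0 : 0 ≤ Y (Fin.last n) := (interior_subset hY).2
    rcases lt_or_eq_of_le hY0 with h | h
    · exact h
    · exfalso
      have hτ : Continuous (fun s : ℝ => Function.update Y (Fin.last n) s) := by
        apply continuous_pi
        intro j
        by_cases hj : j = Fin.last n
        · subst hj
          simp only [Function.update_self]
          exact continuous_id
        · simp only [Function.update_of_ne hj]
          exact continuous_const
      have hopen : IsOpen ((fun s : ℝ => Function.update Y (Fin.last n) s) ⁻¹' interior S) :=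
        hτ.isOpen_preimage _ isOpen_interior
      have hmem : Y (Fin.last n) ∈ (fun s : ℝ => Function.update Y (Fin.last n) s) ⁻¹' interior S := by
        show Function.update Y (Fin.last n) (Y (Fin.last n)) ∈ interior S
        rw [Function.update_eq_self]
        exact hY
      obtain ⟨ε, hε, hball⟩ := Metric.isOpen_iff.mp hopen _ hmem
      have hin : Y (Fin.last n) - ε/2 ∈ Metric.ball (Y (Fin.last n)) ε := by
        rw [Metric.mem_ball, Real.dist_eq,
          show Y (Fin.last n) - ε/2 - Y (Fin.last n) = -(ε/2) by ring, abs_neg,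
          abs_of_pos (by linarith)]
        linarith
      have := (interior_subset (hball hin)).2
      simp only [Function.update_self] at this
      linarith

lemma snoc_mem_interior {n : ℕ} {K : Set (Fin n → ℝ)} {x : Fin n → ℝ}
    (hx : x ∈ interior K) {c : ℝ} (hc : 0 < c) :
    (Fin.snoc x c : Fin (n+1) → ℝ) ∈ interior {y : Fin (n + 1) → ℝ |
        (fun i : Fin n => y i.castSucc) ∈ K ∧ 0 ≤ y (Fin.last n)} := by
  set U := {y : Fin (n + 1) → ℝ |
      (fun i : Fin n => y i.castSucc) ∈ interior K ∧ 0 < y (Fin.last n)} with hU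
  have hUopen : IsOpen U := by
    have h1 : Continuous (fun y : Fin (n+1) → ℝ => (fun i : Fin n => y i.castSucc)) :=
      continuous_pi fun i => continuous_apply _
    have h2 : Continuous (fun y : Fin (n+1) → ℝ => y (Fin.last n)) := continuous_apply _
    exact (h1.isOpen_preimage _ isOpen_interior).inter (h2.isOpen_preimage _ isOpen_Ioi)
  have hsub : U ⊆ {y : Fin (n + 1) → ℝ |
      (fun i : Fin n => y i.castSucc) ∈ K ∧ 0 ≤ y (Fin.last n)} :=
    fun y hy => ⟨interior_subset hy.1, hy.2.le⟩
  apply interior_maximal hsub hUopen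
  constructor
  · simpa [Fin.snoc_castSucc] using hx
  · simpa [Fin.snoc_last] using hc

-- eval computation for the (n+1)-variable polynomial
lemma eval_big {n : ℕ} (f g : MvPolynomial (Fin n) ℝ) (Z : Fin (n+1) → ℂ) :
    MvPolynomial.eval Z (((rename Fin.castSucc g + X (Fin.last n) * rename Fin.castSucc f) :
        MvPolynomial (Fin (n + 1)) ℝ).map (algebraMap ℝ ℂ))
      = MvPolynomial.eval (fun i : Fin n => Z i.castSucc) (g.map (algebraMap ℝ ℂ))
        + Z (Fin.last n) * MvPolynomial.eval (fun i : Fin n => Z i.castSucc) (f.map (algebraMap ℝ ℂ)) := by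
  simp only [map_add, map_mul, MvPolynomial.map_X,
    MvPolynomial.map_rename, map_add, map_mul, MvPolynomial.eval_X, MvPolynomial.eval_rename]
  rfl

/-- `g + i f` is `K`-stable iff `g + w f` is `(K × ℝ≥0)`-stable. -/
theorem stmt8 {n : ℕ} (K : Set (Fin n → ℝ))
    (hKcl : IsClosed K) (hKconv : Convex ℝ K)
    (hKcone : ∀ (c : ℝ), 0 ≤ c → ∀ x ∈ K, c • x ∈ K)
    (hKpointed : K ∩ (-K) ⊆ {0}) (hKfull : (interior K).Nonempty)
    (f g : MvPolynomial (Fin n) ℝ) :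
    KStable K (g.map (algebraMap ℝ ℂ) + C Complex.I * f.map (algebraMap ℝ ℂ)) ↔
      KStable {y : Fin (n + 1) → ℝ |
          (fun i : Fin n => y i.castSucc) ∈ K ∧ 0 ≤ y (Fin.last n)}
        (((rename Fin.castSucc g + X (Fin.last n) * rename Fin.castSucc f) :
            MvPolynomial (Fin (n + 1)) ℝ).map (algebraMap ℝ ℂ)) := by
  constructor
  · intro hs Z hZ
    obtain ⟨h1, h2⟩ := mem_interior_prod hZ
    rw [eval_big f g Z]
    exact core hKcone f g hs (fun i : Fin n => Z i.castSucc) h1 (Z (Fin.last n)) h2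
  · intro hs z hz
    set Z : Fin (n+1) → ℂ := Fin.snoc z Complex.I with hZ
    have hmem : (fun j => (Z j).im) ∈ interior {y : Fin (n + 1) → ℝ |
        (fun i : Fin n => y i.castSucc) ∈ K ∧ 0 ≤ y (Fin.last n)} := by
      have heq : (fun j => (Z j).im) = (Fin.snoc (fun i => (z i).im) 1 : Fin (n+1) → ℝ) := by
        funext j
        induction j using Fin.lastCases with
        | last => simp [hZ, Fin.snoc_last]
        | cast i => simp [hZ, Fin.snoc_castSucc]
      rw [heq]
      exact snoc_mem_interior hz one_pos
    have := hs Z hmem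
    rw [eval_big f g Z] at this
    have hcs : (fun i : Fin n => Z i.castSucc) = z := by
      funext i; simp [hZ, Fin.snoc_castSucc]
    have hlast : Z (Fin.last n) = Complex.I := by simp [hZ, Fin.snoc_last]
    rw [hcs, hlast] at this
    simpa [map_add, map_mul, MvPolynomial.eval_C] using this
end

section
/- Let f, g ∈ ℝ[z₁,…,zₙ] be nonzero and K ⊂ ℝⁿ a proper cone. If g + i·f is K-stable, then the directional Wronskian W_v(f,g) = (∂_v f)·g − f·(∂_v g) satisfies W_v(f,g)(x) ≤ 0 for all x ∈ ℝⁿ and all v ∈ int K. -/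
open MvPolynomial

/-- Directional derivative `∂_v h = Σⱼ vⱼ ∂h/∂zⱼ`. -/
noncomputable def dirDeriv {n : ℕ} (v : Fin n → ℝ) (h : MvPolynomial (Fin n) ℝ) :
    MvPolynomial (Fin n) ℝ :=
  ∑ j, C (v j) * pderiv j h

/-- The directional Wronskian `W_v(f,g) = (∂_v f) g − f (∂_v g)`. -/
noncomputable def wronskian {n : ℕ} (v : Fin n → ℝ) (f g : MvPolynomial (Fin n) ℝ) :
    MvPolynomial (Fin n) ℝ :=
  dirDeriv v f * g - f * dirDeriv v g

lemma dirDeriv_C {n : ℕ} (v : Fin n → ℝ) (a : ℝ) : dirDeriv v (C a) = 0 := by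
  simp [dirDeriv]

lemma dirDeriv_add {n : ℕ} (v : Fin n → ℝ) (p q : MvPolynomial (Fin n) ℝ) :
    dirDeriv v (p + q) = dirDeriv v p + dirDeriv v q := by
  simp [dirDeriv, mul_add, Finset.sum_add_distrib]

lemma dirDeriv_mul_X {n : ℕ} (v : Fin n → ℝ) (p : MvPolynomial (Fin n) ℝ) (j : Fin n) :
    dirDeriv v (p * X j) = dirDeriv v p * X j + C (v j) * p := by
  classical
  simp only [dirDeriv, pderiv_mul, pderiv_X, mul_add, Finset.sum_add_distrib]
  congr 1
  · rw [Finset.sum_mul]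
    exact Finset.sum_congr rfl (by intros; ring)
  · rw [Finset.sum_eq_single j]
    · simp
    · intro b _ hb
      simp [Pi.single_eq_of_ne hb.symm]
    · simp

lemma derivative_aeval_line {n : ℕ} (x v : Fin n → ℝ) (p : MvPolynomial (Fin n) ℝ) :
    Polynomial.derivative (MvPolynomial.aeval
      (fun j => Polynomial.C (x j) + Polynomial.C (v j) * Polynomial.X) p) =
    MvPolynomial.aeval (fun j => Polynomial.C (x j) + Polynomial.C (v j) * Polynomial.X)
      (dirDeriv v p) := by
  induction p using MvPolynomial.induction_on with
  | C a => simp [dirDeriv_C]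
  | add p q hp hq => simp [dirDeriv_add, map_add, hp, hq]
  | mul_X p j hp =>
    rw [dirDeriv_mul_X]
    simp only [map_add, map_mul, aeval_X, aeval_C, Polynomial.derivative_mul, hp,
      Polynomial.derivative_add, Polynomial.derivative_C, Polynomial.derivative_X,
      Polynomial.algebraMap_eq, mul_one, zero_add, mul_zero, add_zero]
    ring

lemma eval_aeval_line_real {n : ℕ} (x v : Fin n → ℝ) (p : MvPolynomial (Fin n) ℝ) (t : ℝ) :
    Polynomial.eval t (MvPolynomial.aeval
      (fun j => Polynomial.C (x j) + Polynomial.C (v j) * Polynomial.X) p) =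
    MvPolynomial.eval (fun j => x j + t * v j) p := by
  induction p using MvPolynomial.induction_on with
  | C a => simp
  | add p q hp hq => simp [hp, hq]
  | mul_X p j hp =>
    simp only [map_mul, aeval_X, Polynomial.eval_mul, Polynomial.eval_add, Polynomial.eval_C,
      Polynomial.eval_X, hp, eval_mul, eval_X]
    ring

lemma eval_aeval_line_complex {n : ℕ} (x v : Fin n → ℝ) (p : MvPolynomial (Fin n) ℝ) (t : ℂ) :
    Polynomial.eval t (Polynomial.map (algebraMap ℝ ℂ) (MvPolynomial.aeval
      (fun j => Polynomial.C (x j) + Polynomial.C (v j) * Polynomial.X) p)) =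
    MvPolynomial.eval (fun j => (x j : ℂ) + t * (v j : ℂ)) (p.map (algebraMap ℝ ℂ)) := by
  induction p using MvPolynomial.induction_on with
  | C a => simp [Complex.coe_algebraMap]
  | add p q hp hq => simp [hp, hq]
  | mul_X p j hp =>
    simp only [map_mul, aeval_X, Polynomial.map_mul, Polynomial.map_add, Polynomial.map_C,
      Polynomial.map_X, Polynomial.eval_mul, Polynomial.eval_add, Polynomial.eval_C,
      Polynomial.eval_X, hp, MvPolynomial.map_X, eval_mul, eval_X, Complex.coe_algebraMap]
    ring

lemma step_ineq (A B w : ℂ) (hw : ((starRingEnd ℂ) w).im ≤ 0)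
    (hIH : (B * (starRingEnd ℂ) A).im ≤ 0) :
    ((A + w * B) * (starRingEnd ℂ) (w * A)).im ≤ 0 := by
  have h1 : (A + w * B) * (starRingEnd ℂ) (w * A)
      = ((starRingEnd ℂ) w) * (A * (starRingEnd ℂ) A)
        + (w * (starRingEnd ℂ) w) * (B * (starRingEnd ℂ) A) := by
    rw [map_mul]; ring
  rw [h1, Complex.mul_conj, Complex.mul_conj]
  simp only [Complex.add_im, Complex.mul_im, Complex.ofReal_im, Complex.ofReal_re,
    mul_zero, zero_mul, add_zero, zero_add]
  rw [Complex.mul_im] at hIH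
  have h2 := mul_nonpos_of_nonpos_of_nonneg hw (Complex.normSq_nonneg A)
  have h3 := mul_nonpos_of_nonneg_of_nonpos (Complex.normSq_nonneg w) hIH
  nlinarith []

lemma im_wron_prod (c : ℂ) (t : ℝ) (s : Multiset ℂ) (hs : ∀ r ∈ s, r.im ≤ 0) :
    ((Polynomial.derivative
        (Polynomial.C c * (s.map fun r => Polynomial.X - Polynomial.C r).prod)).eval (t : ℂ)
      * (starRingEnd ℂ)
        ((Polynomial.C c * (s.map fun r => Polynomial.X - Polynomial.C r).prod).eval (t : ℂ))).im
      ≤ 0 := by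
  induction s using Multiset.induction with
  | empty => simp
  | cons a s ih =>
    have hq : Polynomial.C c * ((a ::ₘ s).map fun r => Polynomial.X - Polynomial.C r).prod
        = (Polynomial.X - Polynomial.C a)
          * (Polynomial.C c * (s.map fun r => Polynomial.X - Polynomial.C r).prod) := by
      rw [Multiset.map_cons, Multiset.prod_cons]; ring
    rw [hq, Polynomial.derivative_mul]
    set q0 := Polynomial.C c * (s.map fun r => Polynomial.X - Polynomial.C r).prod with hq0
    simp only [Polynomial.derivative_sub, Polynomial.derivative_X, Polynomial.derivative_C,
      sub_zero, one_mul, Polynomial.eval_add, Polynomial.eval_mul, Polynomial.eval_sub,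
      Polynomial.eval_X, Polynomial.eval_C]
    exact step_ineq _ _ _
      (by simp only [Complex.conj_im, Complex.sub_im, Complex.ofReal_im, zero_sub, neg_neg]
          exact hs a (Multiset.mem_cons_self a s))
      (ih fun r hr => hs r (Multiset.mem_cons_of_mem hr))

lemma im_deriv_conj_le (Q : Polynomial ℂ)
    (hup : ∀ z : ℂ, 0 < z.im → Q.eval z ≠ 0) (t : ℝ) :
    ((Polynomial.derivative Q).eval (t : ℂ) * (starRingEnd ℂ) (Q.eval (t : ℂ))).im ≤ 0 := by
  have hsplit := (IsAlgClosed.splits Q).eq_prod_roots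
  have hs : ∀ r ∈ Q.roots, r.im ≤ 0 := by
    intro r hr
    by_contra hlt
    push_neg at hlt
    exact hup r hlt (Polynomial.isRoot_of_mem_roots hr)
  have := im_wron_prod Q.leadingCoeff t Q.roots hs
  rwa [← hsplit] at this

open Pointwise in
theorem stmt11' {n : ℕ} (K : Set (Fin n → ℝ))
    (hKcone : ∀ (c : ℝ), 0 ≤ c → ∀ x ∈ K, c • x ∈ K)
    (f g : MvPolynomial (Fin n) ℝ)
    (h : ∀ z : Fin n → ℂ, (fun j => (z j).im) ∈ interior K →
      MvPolynomial.eval z (g.map (algebraMap ℝ ℂ) + C Complex.I * f.map (algebraMap ℝ ℂ)) ≠ 0) :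
    ∀ v ∈ interior K, ∀ x : Fin n → ℝ,
      MvPolynomial.eval x (dirDeriv v f * g - f * dirDeriv v g) ≤ 0 := by
  intro v hv x
  classical
  set L : Fin n → Polynomial ℝ :=
    fun j => Polynomial.C (x j) + Polynomial.C (v j) * Polynomial.X with hL
  set F : Polynomial ℝ := MvPolynomial.aeval L f with hF
  set G : Polynomial ℝ := MvPolynomial.aeval L g with hG
  set Q : Polynomial ℂ := Polynomial.map (algebraMap ℝ ℂ) G
    + Polynomial.C Complex.I * Polynomial.map (algebraMap ℝ ℂ) F with hQdef
  -- stability of Q on the upper half plane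
  have hQstab : ∀ z : ℂ, 0 < z.im → Polynomial.eval z Q ≠ 0 := by
    intro z hz
    have hmem : (fun j => (((x j : ℂ) + z * (v j : ℂ))).im) ∈ interior K := by
      have heq : (fun j => (((x j : ℂ) + z * (v j : ℂ))).im) = z.im • v := by
        funext j
        simp [Complex.add_im, Complex.mul_im, Complex.ofReal_im, Complex.ofReal_re]
      rw [heq]
      have h1 : z.im • v ∈ z.im • interior K := Set.smul_mem_smul_set hv
      rw [← interior_smul₀ (ne_of_gt hz)] at h1
      refine interior_mono ?_ h1
      rintro y ⟨u, hu, rfl⟩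
      exact hKcone z.im hz.le u hu
    have hne := h (fun j => (x j : ℂ) + z * (v j : ℂ)) hmem
    rw [map_add, map_mul, eval_C] at hne
    rw [hQdef, Polynomial.eval_add, Polynomial.eval_mul, Polynomial.eval_C,
      eval_aeval_line_complex, eval_aeval_line_complex]
    exact hne
  -- value of the wronskian along the line
  have hx0 : MvPolynomial.eval x (dirDeriv v f * g - f * dirDeriv v g)
      = Polynomial.eval 0 (Polynomial.derivative F * G - F * Polynomial.derivative G) := by
    have h1 : MvPolynomial.eval (fun j => x j + (0:ℝ) * v j)
        (dirDeriv v f * g - f * dirDeriv v g)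
        = Polynomial.eval 0 (Polynomial.derivative F * G - F * Polynomial.derivative G) := by
      rw [← eval_aeval_line_real x v _ 0, map_sub, map_mul, map_mul,
        ← derivative_aeval_line, ← derivative_aeval_line]
    have hx : (fun j => x j + (0:ℝ) * v j) = x := by funext j; simp
    rw [hx] at h1
    exact h1
  rw [hx0]
  -- the key inequality via the complex polynomial Q
  have him := im_deriv_conj_le Q hQstab 0
  -- identify eval 0 W with the imaginary part
  have hid : Polynomial.eval (0:ℝ) (Polynomial.derivative F * G - F * Polynomial.derivative G)
      = ((Polynomial.derivative Q).eval ((0:ℝ):ℂ)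
          * (starRingEnd ℂ) (Q.eval ((0:ℝ):ℂ))).im := by
    have hQev : Q.eval ((0:ℝ):ℂ) = ((Polynomial.eval (0:ℝ) G : ℝ) : ℂ) + Complex.I * ((Polynomial.eval (0:ℝ) F : ℝ) : ℂ) := by
      rw [hQdef]
      simp [Polynomial.eval_map, Polynomial.eval₂_at_apply, Polynomial.coeff_zero_eq_eval_zero]
    have hQ' : Polynomial.derivative Q = Polynomial.map (algebraMap ℝ ℂ)
        (Polynomial.derivative G) + Polynomial.C Complex.I
          * Polynomial.map (algebraMap ℝ ℂ) (Polynomial.derivative F) := by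
      rw [hQdef]
      simp [Polynomial.derivative_map, Polynomial.derivative_C_mul]
    have hQ'ev : (Polynomial.derivative Q).eval ((0:ℝ):ℂ)
        = ((Polynomial.eval (0:ℝ) (Polynomial.derivative G) : ℝ) : ℂ)
          + Complex.I * ((Polynomial.eval (0:ℝ) (Polynomial.derivative F) : ℝ) : ℂ) := by
      rw [hQ']
      simp [Polynomial.eval_map, Polynomial.eval₂_at_apply, Polynomial.coeff_zero_eq_eval_zero]
    rw [hQev, hQ'ev]
    simp only [map_add, map_mul, Complex.conj_ofReal, Complex.conj_I,
      Polynomial.eval_sub, Polynomial.eval_mul]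
    simp [Complex.add_im, Complex.mul_im, Complex.add_re, Complex.mul_re,
      Complex.ofReal_im, Complex.ofReal_re, Complex.I_re, Complex.I_im]
    ring
  rw [hid]
  exact him

/-- If `g + i f` is `K`-stable, then `W_v(f,g) ≤ 0` on `ℝⁿ` for all `v ∈ int K`. -/
theorem stmt11 {n : ℕ} (K : Set (Fin n → ℝ))
    (hKcl : IsClosed K) (hKconv : Convex ℝ K)
    (hKcone : ∀ (c : ℝ), 0 ≤ c → ∀ x ∈ K, c • x ∈ K)
    (hKpointed : K ∩ (-K) ⊆ {0}) (hKfull : (interior K).Nonempty)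
    (f g : MvPolynomial (Fin n) ℝ) (hf : f ≠ 0) (hg : g ≠ 0)
    (h : KStable K (g.map (algebraMap ℝ ℂ) + C Complex.I * f.map (algebraMap ℝ ℂ))) :
    ∀ v ∈ interior K, ∀ x : Fin n → ℝ, MvPolynomial.eval x (wronskian v f g) ≤ 0 := by
  intro v hv x
  have := stmt11' K hKcone f g h v hv x
  simpa [wronskian] using this
end

section
/- (Khatri–Rao product positivity) Let A = (A_{ij}) and B = (B_{ij}) be Hermitian block matrices with the same n₁×n₁ block structure (blocks of size p×p and q×q respectively). If A and B are positive semidefinite, then the Khatri–Rao product A∗B = (A_{ij} ⊗ B_{ij}) is positive semidefinite. If A is positive semidefinite with positive definite diagonal blocks and B is positive definite, then A∗B is positive definite. -/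
open scoped ComplexOrder

/-- The Khatri–Rao product of block matrices `A = (A_{ij})` (blocks `p × p`) and
`B = (B_{ij})` (blocks `q × q`) with the same `n × n` block structure: its `(i,j)` block
is the Kronecker product `A_{ij} ⊗ B_{ij}`. -/
def khatriRao {n p q : ℕ} (A : Matrix (Fin n × Fin p) (Fin n × Fin p) ℂ)
    (B : Matrix (Fin n × Fin q) (Fin n × Fin q) ℂ) :
    Matrix (Fin n × (Fin p × Fin q)) (Fin n × (Fin p × Fin q)) ℂ :=
  Matrix.of fun x y => A (x.1, x.2.1) (y.1, y.2.1) * B (x.1, x.2.2) (y.1, y.2.2)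

namespace KhatriRaoAux

open Matrix

variable {n p q : ℕ}

/-- auxiliary rectangular matrices in the decomposition of the Khatri–Rao product -/
def krM (C : Matrix (Fin n × Fin p) (Fin n × Fin p) ℂ) (r : Fin n × Fin p) :
    Matrix (Fin n × Fin q) (Fin n × (Fin p × Fin q)) ℂ :=
  Matrix.of fun ib u => if ib.1 = u.1 ∧ ib.2 = u.2.2 then C r (ib.1, u.2.1) else 0

lemma krM_mulVec (C : Matrix (Fin n × Fin p) (Fin n × Fin p) ℂ)
    (r : Fin n × Fin p) (x : Fin n × (Fin p × Fin q) → ℂ) (i : Fin n) (b : Fin q) :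
    (krM C r *ᵥ x) (i, b) = ∑ a : Fin p, C r (i, a) * x (i, (a, b)) := by
  simp [krM, mulVec, dotProduct, Fintype.sum_prod_type, ite_and, Finset.sum_comm (γ := Fin p),
    Finset.mul_sum, ite_mul]

lemma kr_decomp (A : Matrix (Fin n × Fin p) (Fin n × Fin p) ℂ)
    (B : Matrix (Fin n × Fin q) (Fin n × Fin q) ℂ)
    (C : Matrix (Fin n × Fin p) (Fin n × Fin p) ℂ)
    (hC : ∀ i j, A i j = ∑ r, star (C r i) * C r j) :
    khatriRao A B = ∑ r, (krM (q := q) C r)ᴴ * B * (krM (q := q) C r) := by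
  ext ⟨i, a, b⟩ ⟨j, c, d⟩
  simp only [Finset.sum_apply, Matrix.sum_apply, Matrix.mul_apply, conjTranspose_apply,
    khatriRao, krM, Matrix.of_apply, hC]
  simp [Fintype.sum_prod_type, ite_and, apply_ite, Finset.mul_sum, Finset.sum_mul,
    mul_comm, mul_left_comm]

lemma form_eq (A : Matrix (Fin n × Fin p) (Fin n × Fin p) ℂ)
    (B : Matrix (Fin n × Fin q) (Fin n × Fin q) ℂ)
    (C : Matrix (Fin n × Fin p) (Fin n × Fin p) ℂ)
    (hC : ∀ i j, A i j = ∑ r, star (C r i) * C r j)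
    (x : Fin n × (Fin p × Fin q) → ℂ) :
    star x ⬝ᵥ khatriRao A B *ᵥ x
      = ∑ r, star (krM (q := q) C r *ᵥ x) ⬝ᵥ B *ᵥ (krM C r *ᵥ x) := by
  rw [kr_decomp A B C hC]
  have h1 : (∑ r, (krM (q := q) C r)ᴴ * B * krM (q := q) C r) *ᵥ x
      = ∑ r, ((krM (q := q) C r)ᴴ * B * krM (q := q) C r) *ᵥ x := by
    ext i
    simp only [mulVec, dotProduct, Matrix.sum_apply, Finset.sum_apply, Finset.sum_mul]
    exact Finset.sum_comm
  rw [h1]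
  have h2 : star x ⬝ᵥ (∑ r, ((krM (q := q) C r)ᴴ * B * krM (q := q) C r) *ᵥ x)
      = ∑ r, star x ⬝ᵥ (((krM (q := q) C r)ᴴ * B * krM (q := q) C r) *ᵥ x) := by
    simp only [dotProduct, Finset.sum_apply, Finset.mul_sum]
    exact Finset.sum_comm
  rw [h2]
  refine Finset.sum_congr rfl fun r _ => ?_
  rw [Matrix.mul_assoc, star_mulVec, ← Matrix.dotProduct_mulVec, mulVec_mulVec, mulVec_mulVec, ← Matrix.mul_assoc]

lemma block_form (A : Matrix (Fin n × Fin p) (Fin n × Fin p) ℂ)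
    (C : Matrix (Fin n × Fin p) (Fin n × Fin p) ℂ)
    (hC : ∀ i j, A i j = ∑ r, star (C r i) * C r j)
    (i : Fin n) (u : Fin p → ℂ) :
    star u ⬝ᵥ (Matrix.of fun a b => A (i, a) (i, b) : Matrix (Fin p) (Fin p) ℂ) *ᵥ u
      = ∑ r, star (∑ a, C r (i, a) * u a) * (∑ a, C r (i, a) * u a) := by
  simp only [dotProduct, mulVec, Matrix.of_apply, Pi.star_apply, hC, star_sum, star_mul',
    Finset.mul_sum, Finset.sum_mul]
  rw [Finset.sum_comm]
  conv_lhs => enter [2, c]; rw [Finset.sum_comm]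
  rw [Finset.sum_comm]
  refine Finset.sum_congr rfl fun r _ => Finset.sum_congr rfl fun c _ =>
    Finset.sum_congr rfl fun a _ => by ring

/-- existence of a "square-root style" decomposition of a psd matrix -/
lemma exists_C (A : Matrix (Fin n × Fin p) (Fin n × Fin p) ℂ) (hA : A.PosSemidef) :
    ∃ C : Matrix (Fin n × Fin p) (Fin n × Fin p) ℂ,
      ∀ i j, A i j = ∑ r, star (C r i) * C r j := by
  open MatrixOrder in
  obtain ⟨S, hS⟩ := CStarAlgebra.nonneg_iff_eq_star_mul_self.mp hA.nonneg
  refine ⟨S, fun i j => ?_⟩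
  rw [hS, Matrix.star_eq_conjTranspose, Matrix.mul_apply]
  rfl

end KhatriRaoAux

open KhatriRaoAux Matrix in
/-- Khatri–Rao product positivity: if `A` and `B` are psd then `A ∗ B` is psd; if `A` is
psd with positive definite diagonal blocks and `B` is positive definite, then `A ∗ B` is
positive definite. -/
theorem stmt15 {n p q : ℕ} (A : Matrix (Fin n × Fin p) (Fin n × Fin p) ℂ)
    (B : Matrix (Fin n × Fin q) (Fin n × Fin q) ℂ) :
    (A.PosSemidef → B.PosSemidef → (khatriRao A B).PosSemidef) ∧
      (A.PosSemidef →
        (∀ i : Fin n, (Matrix.of fun a b => A (i, a) (i, b) :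
            Matrix (Fin p) (Fin p) ℂ).PosDef) →
        B.PosDef → (khatriRao A B).PosDef) := by
  have herm : A.IsHermitian → B.IsHermitian → (khatriRao A B).IsHermitian := by
    intro hA hB
    rw [Matrix.IsHermitian]
    ext ⟨i, a, b⟩ ⟨j, c, d⟩
    simp only [conjTranspose_apply, khatriRao, Matrix.of_apply, star_mul']
    rw [hA.apply, hB.apply]
  constructor
  · intro hA hB
    obtain ⟨C, hC⟩ := exists_C A hA
    refine .of_dotProduct_mulVec_nonneg (herm hA.1 hB.1) fun x => ?_
    rw [form_eq A B C hC x]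
    exact Finset.sum_nonneg fun r _ => hB.dotProduct_mulVec_nonneg _
  · intro hA hdiag hB
    obtain ⟨C, hC⟩ := exists_C A hA
    refine .of_dotProduct_mulVec_pos (herm hA.1 hB.1) fun x hx => ?_
    rw [form_eq A B C hC x]
    have hy : ∃ r, krM (q := q) C r *ᵥ x ≠ 0 := by
      by_contra h
      push_neg at h
      obtain ⟨⟨i, a, b⟩, hxa⟩ := Function.ne_iff.mp hx
      set u : Fin p → ℂ := fun a => x (i, (a, b)) with hu
      have hune : u ≠ 0 := fun h0 => hxa (by simpa [hu] using congrFun h0 a)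
      have hsum : ∀ r, (∑ a, C r (i, a) * u a) = 0 := by
        intro r
        have := congrFun (h r) (i, b)
        rwa [krM_mulVec] at this
      have hpos := (hdiag i).dotProduct_mulVec_pos hune
      rw [block_form A C hC i u] at hpos
      simp [hsum] at hpos
    obtain ⟨r, hr⟩ := hy
    exact Finset.sum_pos' (fun s _ => hB.posSemidef.dotProduct_mulVec_nonneg _) ⟨r, Finset.mem_univ r, hB.dotProduct_mulVec_pos hr⟩
end

section
/- Let A = (A_{ij})_{n×n} be a positive semidefinite Hermitian block matrix with blocks of size d×d, and B a Hermitian d×d matrix. Then the polynomial f(Z) = det(Σ_{i,j=1}^n A_{ij} z_{ij} + B) in the entries of a symmetric n×n matrix variable Z = (z_{ij}) is psd-stable or identically zero. -/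
open scoped ComplexOrder

/-- The `(i,j)` block (of size `d × d`) of a block matrix indexed by `Fin n × Fin d`. -/
def block {n d : ℕ} (A : Matrix (Fin n × Fin d) (Fin n × Fin d) ℂ) (i j : Fin n) :
    Matrix (Fin d) (Fin d) ℂ :=
  Matrix.of fun a b => A (i, a) (j, b)

open Matrix Finset

section helpers

variable {m n : Type*} [Fintype n]

lemma mySum_mulVec {ι R : Type*} [NonUnitalNonAssocSemiring R] (s : Finset ι)
    (M : ι → Matrix m n R) (v : n → R) :
    (∑ i ∈ s, M i) *ᵥ v = ∑ i ∈ s, M i *ᵥ v := by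
  induction s using Finset.cons_induction with
  | empty => simp
  | cons a s ha ih => simp [Finset.sum_cons, Matrix.add_mulVec, ih]

lemma myMulVec_sum {ι R : Type*} [NonUnitalNonAssocSemiring R] (s : Finset ι)
    (M : Matrix m n R) (f : ι → (n → R)) :
    M *ᵥ (∑ i ∈ s, f i) = ∑ i ∈ s, M *ᵥ f i := by
  induction s using Finset.cons_induction with
  | empty => simp
  | cons a s ha ih => simp [Finset.sum_cons, Matrix.mulVec_add, ih]

lemma myDot_sum {ι R : Type*} [NonUnitalNonAssocSemiring R] (s : Finset ι)
    (x : n → R) (f : ι → (n → R)) :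
    x ⬝ᵥ (∑ i ∈ s, f i) = ∑ i ∈ s, x ⬝ᵥ f i := by
  induction s using Finset.cons_induction with
  | empty => simp
  | cons a s ha ih => simp [Finset.sum_cons, dotProduct_add, ih]

lemma mySum_dot {ι R : Type*} [NonUnitalNonAssocSemiring R] (s : Finset ι)
    (x : n → R) (f : ι → (n → R)) :
    (∑ i ∈ s, f i) ⬝ᵥ x = ∑ i ∈ s, f i ⬝ᵥ x := by
  induction s using Finset.cons_induction with
  | empty => simp
  | cons a s ha ih => simp [Finset.sum_cons, add_dotProduct, ih]

lemma conj_quad (A : Matrix n n ℂ) (x y : n → ℂ) :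
    (starRingEnd ℂ) (star x ⬝ᵥ A *ᵥ y) = star y ⬝ᵥ Aᴴ *ᵥ x := by
  simp only [dotProduct, Matrix.mulVec, Matrix.conjTranspose_apply, map_sum,
    _root_.map_mul, Pi.star_apply, Complex.star_def, Finset.mul_sum, Finset.sum_mul]
  rw [Finset.sum_comm]
  refine Finset.sum_congr rfl fun i _ => Finset.sum_congr rfl fun j _ => ?_
  simp [mul_comm, mul_left_comm, Complex.conj_conj]

end helpers

section main

variable {n d : ℕ} (A : Matrix (Fin n × Fin d) (Fin n × Fin d) ℂ)
  (v : Fin d → ℂ)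

/-- embedding of `v` into the `i`-th block slot -/
def wv (i : Fin n) : Fin n × Fin d → ℂ := fun p => if p.1 = i then v p.2 else 0

lemma key1 (i j : Fin n) (a : Fin d) : (A *ᵥ wv v j) (i, a) = ((block A i j) *ᵥ v) a := by
  simp only [Matrix.mulVec, dotProduct, block, Matrix.of_apply, wv]
  rw [Fintype.sum_prod_type]
  simp

lemma key2 (i j : Fin n) :
    star (wv v i) ⬝ᵥ A *ᵥ wv v j = star v ⬝ᵥ (block A i j) *ᵥ v := by
  simp only [dotProduct]
  rw [Fintype.sum_prod_type]
  have : ∀ k a, star (wv v i) (k, a) = if k = i then star (v a) else 0 := by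
    intro k a; simp [wv]; split <;> simp
  simp only [this, ite_mul, zero_mul]
  simp [key1 A v i j]

end main

section gram

variable {n d : ℕ} {A : Matrix (Fin n × Fin d) (Fin n × Fin d) ℂ} (v : Fin d → ℂ)

lemma quad_expand (x : Fin n → ℝ) :
    star (∑ i, (x i : ℂ) • wv v i) ⬝ᵥ A *ᵥ (∑ i, (x i : ℂ) • wv v i)
      = ∑ i, ∑ j, ((x i : ℂ) * (x j : ℂ)) * (star (wv v i) ⬝ᵥ A *ᵥ wv v j) := by
  rw [star_sum]
  simp only [star_smul, Complex.star_def, Complex.conj_ofReal]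
  rw [myMulVec_sum, mySum_dot]
  refine Finset.sum_congr rfl fun i _ => ?_
  rw [smul_dotProduct]
  simp only [Matrix.mulVec_smul]
  rw [myDot_sum, Finset.smul_sum]
  refine Finset.sum_congr rfl fun j _ => ?_
  rw [dotProduct_smul]
  simp only [smul_eq_mul, mul_assoc]

lemma S_posSemidef (hA : A.PosSemidef) :
    (Matrix.of fun i j => (star v ⬝ᵥ (block A i j) *ᵥ v).re :
        Matrix (Fin n) (Fin n) ℝ).PosSemidef := by
  have hconj : ∀ i j : Fin n, star v ⬝ᵥ (block A j i) *ᵥ v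
      = (starRingEnd ℂ) (star v ⬝ᵥ (block A i j) *ᵥ v) := by
    intro i j
    rw [← key2, ← key2, conj_quad, hA.1]
  rw [Matrix.posSemidef_iff_dotProduct_mulVec]
  constructor
  · ext i j
    simp only [Matrix.conjTranspose_apply, Matrix.of_apply, star_trivial]
    rw [hconj j i]
    simp
  · intro x
    have h0 := hA.dotProduct_mulVec_nonneg (∑ i, (x i : ℂ) • wv v i)
    rw [quad_expand] at h0
    have hre : 0 ≤ (∑ i, ∑ j, ((x i : ℂ) * (x j : ℂ)) *
        (star (wv v i) ⬝ᵥ A *ᵥ wv v j)).re := by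
      rw [Complex.le_def] at h0
      simpa using h0.1
    calc (0:ℝ) ≤ (∑ i, ∑ j, ((x i : ℂ) * (x j : ℂ)) *
        (star (wv v i) ⬝ᵥ A *ᵥ wv v j)).re := hre
    _ = star x ⬝ᵥ (Matrix.of fun i j => (star v ⬝ᵥ (block A i j) *ᵥ v).re :
        Matrix (Fin n) (Fin n) ℝ) *ᵥ x := by
      have hrw : ∀ i : Fin n, (∑ j, ((x i : ℂ) * (x j : ℂ)) *
          (star (wv v i) ⬝ᵥ A *ᵥ wv v j)).re
          = ∑ j, x i * x j * (star v ⬝ᵥ (block A i j) *ᵥ v).re := by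
        intro i
        rw [Complex.re_sum]
        refine Finset.sum_congr rfl fun j _ => ?_
        rw [key2, ← Complex.ofReal_mul, Complex.re_ofReal_mul]
      rw [Complex.re_sum]
      simp only [hrw]
      simp only [dotProduct, Matrix.mulVec, Matrix.of_apply, star_trivial,
        Finset.mul_sum]
      refine Finset.sum_congr rfl fun i _ => Finset.sum_congr rfl fun j _ => ?_
      ring

end gram

lemma trace_pair_zero {n : ℕ} {Y S : Matrix (Fin n) (Fin n) ℝ} (hY : Y.PosDef)
    (hS : S.PosSemidef) (h : ∑ i, ∑ j, Y i j * S i j = 0) : S = 0 := by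
  obtain ⟨C, hC⟩ := (by open MatrixOrder in exact CStarAlgebra.nonneg_iff_eq_star_mul_self.mp hS.nonneg : ∃ C : Matrix (Fin n) (Fin n) ℝ, S = star C * C)
  have key : ∑ i, ∑ j, Y i j * S i j
      = ∑ k, (fun i => C k i) ⬝ᵥ Y *ᵥ (fun j => C k j) := by
    have e1 : ∀ i j, Y i j * S i j = ∑ k, C k i * (Y i j * C k j) := by
      intro i j
      rw [hC, Matrix.mul_apply, Finset.mul_sum]
      exact Finset.sum_congr rfl fun k _ => by
        simp only [Matrix.star_apply, Matrix.conjTranspose_apply, star_trivial]; ring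
    simp only [e1]
    calc ∑ i, ∑ j, ∑ k, C k i * (Y i j * C k j)
        = ∑ i, ∑ k, ∑ j, C k i * (Y i j * C k j) :=
          Finset.sum_congr rfl fun i _ => Finset.sum_comm
      _ = ∑ k, ∑ i, ∑ j, C k i * (Y i j * C k j) := Finset.sum_comm
      _ = ∑ k, (fun i => C k i) ⬝ᵥ Y *ᵥ (fun j => C k j) := by
          simp [dotProduct, Matrix.mulVec, Finset.mul_sum]
  rw [key] at h
  have hnn : ∀ k ∈ Finset.univ, (0:ℝ) ≤ (fun i => C k i) ⬝ᵥ Y *ᵥ (fun j => C k j) := by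
    intro k _
    simpa using hY.posSemidef.dotProduct_mulVec_nonneg (fun i => C k i)
  have hzero := (Finset.sum_eq_zero_iff_of_nonneg hnn).mp h
  have hrow : ∀ k, (fun i => C k i) = 0 := by
    intro k
    by_contra hk
    have := hY.dotProduct_mulVec_pos hk
    rw [star_trivial, hzero k (Finset.mem_univ k)] at this
    exact lt_irrefl 0 this
  have hC0 : C = 0 := by
    ext k i
    exact congrFun (hrow k) i
  rw [hC, hC0]
  simp


/-- If `A = (A_{ij})` is a psd Hermitian block matrix and `B` is Hermitian, then
`f(Z) = det(Σ A_{ij} z_{ij} + B)` on symmetric matrix variables `Z` is psd-stable or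
identically zero. -/
theorem stmt16 {n d : ℕ} (A : Matrix (Fin n × Fin d) (Fin n × Fin d) ℂ)
    (hA : A.PosSemidef) (B : Matrix (Fin d) (Fin d) ℂ) (hB : B.IsHermitian) :
    (∀ Z : Matrix (Fin n) (Fin n) ℂ, Z.IsSymm →
        (Matrix.of fun i j => (Z i j).im : Matrix (Fin n) (Fin n) ℝ).PosDef →
        (∑ i, ∑ j, Z i j • block A i j + B).det ≠ 0) ∨
      (∀ Z : Matrix (Fin n) (Fin n) ℂ, Z.IsSymm →
        (∑ i, ∑ j, Z i j • block A i j + B).det = 0) := by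
  classical
  by_cases h : ∀ Z : Matrix (Fin n) (Fin n) ℂ, Z.IsSymm →
      (Matrix.of fun i j => (Z i j).im : Matrix (Fin n) (Fin n) ℝ).PosDef →
      (∑ i, ∑ j, Z i j • block A i j + B).det ≠ 0
  · exact Or.inl h
  right
  push_neg at h
  obtain ⟨Z, hZ, hY, hdet⟩ := h
  obtain ⟨v, hv, hMv⟩ := Matrix.exists_mulVec_eq_zero_iff.mpr hdet
  -- expansion of the quadratic form
  have expand : ∀ Z' : Matrix (Fin n) (Fin n) ℂ,
      star v ⬝ᵥ ((∑ i, ∑ j, Z' i j • block A i j + B) *ᵥ v)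
        = (∑ i, ∑ j, Z' i j * (star v ⬝ᵥ (block A i j) *ᵥ v)) + star v ⬝ᵥ B *ᵥ v := by
    intro Z'
    rw [Matrix.add_mulVec, dotProduct_add, mySum_mulVec, myDot_sum]
    congr 1
    refine Finset.sum_congr rfl fun i _ => ?_
    rw [mySum_mulVec, myDot_sum]
    refine Finset.sum_congr rfl fun j _ => ?_
    rw [Matrix.smul_mulVec, dotProduct_smul, smul_eq_mul]
  have hzero : (∑ i, ∑ j, Z i j * (star v ⬝ᵥ (block A i j) *ᵥ v)) + star v ⬝ᵥ B *ᵥ v = 0 := by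
    rw [← expand, hMv, dotProduct_zero]
  -- B contributes nothing to the imaginary part
  have hBim : (star v ⬝ᵥ B *ᵥ v).im = 0 := by
    refine Complex.conj_eq_iff_im.mp ?_
    rw [conj_quad, hB]
  -- Hermitian symmetry of the Gram entries
  have hconj : ∀ i j : Fin n, star v ⬝ᵥ (block A j i) *ᵥ v
      = (starRingEnd ℂ) (star v ⬝ᵥ (block A i j) *ᵥ v) := by
    intro i j
    rw [← key2, ← key2, conj_quad, hA.1]
  -- the real-part sum vanishes
  have hT1 : ∑ i, ∑ j, (Z i j).re * (star v ⬝ᵥ (block A i j) *ᵥ v).im = 0 := by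
    have hswap : ∑ i, ∑ j, (Z i j).re * (star v ⬝ᵥ (block A i j) *ᵥ v).im
        = - ∑ i, ∑ j, (Z i j).re * (star v ⬝ᵥ (block A i j) *ᵥ v).im := by
      calc ∑ i, ∑ j, (Z i j).re * (star v ⬝ᵥ (block A i j) *ᵥ v).im
          = ∑ i, ∑ j, (Z j i).re * (star v ⬝ᵥ (block A j i) *ᵥ v).im :=
            Finset.sum_comm
        _ = ∑ i, ∑ j, -((Z i j).re * (star v ⬝ᵥ (block A i j) *ᵥ v).im) := by
            refine Finset.sum_congr rfl fun i _ => Finset.sum_congr rfl fun j _ => ?_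
            rw [hZ.apply, hconj]
            simp
        _ = - ∑ i, ∑ j, (Z i j).re * (star v ⬝ᵥ (block A i j) *ᵥ v).im := by
            simp [Finset.sum_neg_distrib]
    linarith
  have hT2 : ∑ i, ∑ j, (Z i j).im * (star v ⬝ᵥ (block A i j) *ᵥ v).re = 0 := by
    have him := congrArg Complex.im hzero
    rw [Complex.add_im, hBim, add_zero, Complex.im_sum] at him
    simp only [Complex.im_sum, Complex.mul_im] at him
    rw [Finset.sum_congr rfl (fun i _ => Finset.sum_add_distrib),
      Finset.sum_add_distrib, hT1, zero_add] at him
    simpa using him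
  -- conclude the Gram diagonal vanishes
  have hS0 : (Matrix.of fun i j => (star v ⬝ᵥ (block A i j) *ᵥ v).re :
      Matrix (Fin n) (Fin n) ℝ) = 0 := by
    refine trace_pair_zero hY (S_posSemidef v hA) ?_
    simpa using hT2
  have hAw : ∀ i : Fin n, A *ᵥ wv v i = 0 := by
    intro i
    refine (hA.dotProduct_mulVec_zero_iff (wv v i)).mp ?_
    rw [key2]
    have h1 : (0:ℂ) ≤ star v ⬝ᵥ (block A i i) *ᵥ v := by
      rw [← key2]; exact hA.dotProduct_mulVec_nonneg _
    rw [Complex.le_def] at h1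
    have h2 : (star v ⬝ᵥ (block A i i) *ᵥ v).re = 0 := by
      have := congrFun (congrFun hS0 i) i
      simpa using this
    apply Complex.ext
    · simpa using h2
    · simpa using h1.2.symm
  have hblock : ∀ i j : Fin n, (block A i j) *ᵥ v = 0 := by
    intro i j
    funext a
    rw [← key1 A v i j, hAw j]
    simp
  have hsum0 : ∀ Z' : Matrix (Fin n) (Fin n) ℂ,
      (∑ i, ∑ j, Z' i j • block A i j) *ᵥ v = 0 := by
    intro Z'
    rw [mySum_mulVec]
    refine Finset.sum_eq_zero fun i _ => ?_
    rw [mySum_mulVec]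
    refine Finset.sum_eq_zero fun j _ => ?_
    rw [Matrix.smul_mulVec, hblock i j, smul_zero]
  have hBv : B *ᵥ v = 0 := by
    rw [Matrix.add_mulVec, hsum0, zero_add] at hMv
    exact hMv
  intro Z' _
  rw [← Matrix.exists_mulVec_eq_zero_iff]
  exact ⟨v, hv, by rw [Matrix.add_mulVec, hsum0, hBv, add_zero]⟩
end
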